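/- Let M be a compact orientable 3-manifold with boundary whose relative simplicial volume ‖M,∂M‖ vanishes. Then for every ε > 0 there exists a relative fundamental cycle z ∈ C₃(M,∂M;ℝ) such that ‖z‖₁ ≤ ε and ‖∂z‖₁ ≤ ε. -/

import Mathlib

noncomputable section

open Set Topology
open scoped ENNReal Classical

/-- Euclidean `n`-space. -/
abbrev Euc (n : ℕ) : Type := EuclideanSpace ℝ (Fin n)

/-! ### Singular simplices and locally finite chains -/

/-- The topological standard `n`-simplex. -/
abbrev TopSimplex (n : ℕ) : Type := ↥(stdSimplex ℝ (Fin (n + 1)))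

/-- Singular `n`-simplices of a space `X`. -/
abbrev SingularSimplex (n : ℕ) (X : Type*) [TopologicalSpace X] := C(TopSimplex n, X)

/-- The `i`-th face embedding `Δⁿ → Δⁿ⁺¹` (inserting a zero coordinate at position `i`). -/
def simplexFace {n : ℕ} (i : Fin (n + 2)) : C(TopSimplex n, TopSimplex (n + 1)) where
  toFun x := ⟨fun j => if h : ∃ k, i.succAbove k = j then x.1 h.choose else 0, by
    have key : ∀ k : Fin (n + 1),
        (if h : ∃ k', i.succAbove k' = i.succAbove k then x.1 h.choose else 0) = x.1 k := by
      intro k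
      rw [dif_pos ⟨k, rfl⟩]
      exact congrArg x.1 (Fin.succAbove_right_injective
        (Exists.choose_spec (⟨k, rfl⟩ : ∃ k', i.succAbove k' = i.succAbove k)))
    constructor
    · intro j
      by_cases h : ∃ k, i.succAbove k = j
      · simpa only [dif_pos h] using x.2.1 h.choose
      · simp only [dif_neg h]; exact le_rfl
    · rw [Fin.sum_univ_succAbove
        (fun j => if h : ∃ k, i.succAbove k = j then x.1 h.choose else 0) i]
      rw [dif_neg (by rintro ⟨k, hk⟩; exact Fin.succAbove_ne i k hk)]
      rw [zero_add, Finset.sum_congr rfl fun k _ => key k]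
      exact x.2.2⟩
  continuous_toFun := by
    refine Continuous.subtype_mk (continuous_pi fun j => ?_) _
    by_cases h : ∃ k, i.succAbove k = j
    · simp only [dif_pos h]; exact (continuous_apply h.choose).comp continuous_subtype_val
    · simpa only [dif_neg h] using continuous_const

/-- A locally finite singular `n`-chain with coefficients in `R`: a formal sum
`∑ aₛ σ` such that every compact set meets the images of only finitely many
simplices with nonzero coefficient. -/
structure LFChain (R : Type*) [Zero R] (n : ℕ) (X : Type*) [TopologicalSpace X] where
  coeff : SingularSimplex n X → R
  locFin : ∀ K : Set X, IsCompact K →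
    {σ : SingularSimplex n X | coeff σ ≠ 0 ∧ (Set.range ⇑σ ∩ K).Nonempty}.Finite

namespace LFChain

/-- The coefficient of `τ` in the boundary `∂c` of a locally finite chain `c`. -/
def bdryCoeff {R : Type*} [CommRing R] {X : Type*} [TopologicalSpace X] :
    {n : ℕ} → LFChain R n X → SingularSimplex (n - 1) X → R
  | 0, _, _ => 0
  | (m + 1), c, τ => ∑ᶠ σ : SingularSimplex (m + 1) X,
      c.coeff σ * ∑ i : Fin (m + 2), (-1 : R) ^ (i : ℕ) *
        (if σ.comp (simplexFace i) = τ then 1 else 0)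

/-- The chain `c` is supported in the subset `A`. -/
def SupportedIn {R : Type*} [Zero R] {n : ℕ} {X : Type*} [TopologicalSpace X]
    (c : LFChain R n X) (A : Set X) : Prop :=
  ∀ σ, c.coeff σ ≠ 0 → Set.range ⇑σ ⊆ A

/-- The ℓ¹-norm of a locally finite real chain. -/
def l1Norm {n : ℕ} {X : Type*} [TopologicalSpace X] (c : LFChain ℝ n X) : ℝ≥0∞ :=
  ∑' σ, ENNReal.ofReal |c.coeff σ|

/-- The ℓ¹-norm of the boundary of a locally finite real chain. -/
def bdryNorm {n : ℕ} {X : Type*} [TopologicalSpace X] (c : LFChain ℝ n X) : ℝ≥0∞ :=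
  ∑' τ, ENNReal.ofReal |c.bdryCoeff τ|

end LFChain

/-- `z` is an integral relative fundamental cycle of the pair `(X, B)` in dimension `d`:
its boundary is supported in `B`, and for every `x ∉ B` its class generates the relative
(locally finite) homology of the pair `(X, X ∖ {x})`, i.e. every relative `d`-cycle of
`(X, X ∖ {x})` is, modulo boundaries and chains supported in `X ∖ {x}`, an integral
multiple of `z`. -/
def IsIntFundCycle (d : ℕ) (X : Type*) [TopologicalSpace X] (B : Set X)
    (z : LFChain ℤ d X) : Prop :=
  (∀ τ, z.bdryCoeff τ ≠ 0 → Set.range ⇑τ ⊆ B) ∧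
  ∀ x, x ∉ B → ∀ c : LFChain ℤ d X,
    (∀ τ, c.bdryCoeff τ ≠ 0 → Set.range ⇑τ ⊆ {x}ᶜ) →
    ∃ (k : ℤ) (b : LFChain ℤ (d + 1) X) (a : LFChain ℤ d X), a.SupportedIn {x}ᶜ ∧
      ∀ σ, c.coeff σ = k * z.coeff σ + b.bdryCoeff σ + a.coeff σ

/-- `c` is a real relative fundamental cycle of the pair `(X, B)`: it differs from (the real
chain induced by) an integral fundamental cycle by a boundary plus a chain supported in `B`. -/
def IsRealFundCycle (d : ℕ) (X : Type*) [TopologicalSpace X] (B : Set X)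
    (c : LFChain ℝ d X) : Prop :=
  ∃ z : LFChain ℤ d X, IsIntFundCycle d X B z ∧
    ∃ (b : LFChain ℝ (d + 1) X) (a : LFChain ℝ d X), a.SupportedIn B ∧
      ∀ σ, c.coeff σ = (z.coeff σ : ℝ) + b.bdryCoeff σ + a.coeff σ

/-- The pair `(X, B)` admits an integral fundamental cycle in dimension `d`. -/
def HasFundClass (d : ℕ) (X : Type*) [TopologicalSpace X] (B : Set X) : Prop :=
  ∃ z : LFChain ℤ d X, IsIntFundCycle d X B z

/-- The (relative, locally finite) simplicial volume `‖X, B‖` of the pair `(X, B)`: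
the infimum of the ℓ¹-norms of all real relative fundamental cycles. -/
def relSimplicialVolume (d : ℕ) (X : Type*) [TopologicalSpace X] (B : Set X) : ℝ≥0∞ :=
  ⨅ c : {c : LFChain ℝ d X // IsRealFundCycle d X B c}, (c : LFChain ℝ d X).l1Norm

/-- The simplicial volume `‖X‖` of a manifold without boundary (defined via
locally finite fundamental cycles). -/
def simplicialVolume (d : ℕ) (X : Type*) [TopologicalSpace X] : ℝ≥0∞ :=
  relSimplicialVolume d X ∅

/-! ### Topological manifolds -/

/-- `M` is locally euclidean of dimension `d`. -/
def IsLocEuclidean (d : ℕ) (M : Type*) [TopologicalSpace M] : Prop :=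
  ∀ x : M, ∃ U : Set M, x ∈ U ∧ IsOpen U ∧ Nonempty (↥U ≃ₜ Euc d)

/-- A (second countable, Hausdorff) topological `d`-manifold without boundary. -/
def IsTopManifold (d : ℕ) (M : Type*) [TopologicalSpace M] : Prop :=
  T2Space M ∧ SecondCountableTopology M ∧ IsLocEuclidean d M

/-- The closed half space of `Euc d`. -/
def halfSpace (d : ℕ) : Set (Euc d) := {y | ∀ h : 0 < d, 0 ≤ y ⟨0, h⟩}

/-- A (second countable, Hausdorff) topological `d`-manifold, possibly with boundary. -/
def IsTopManifoldWithBoundary (d : ℕ) (M : Type*) [TopologicalSpace M] : Prop :=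
  T2Space M ∧ SecondCountableTopology M ∧
    ∀ x : M, ∃ U : Set M, x ∈ U ∧ IsOpen U ∧
      ∃ V : Set ↥(halfSpace d), IsOpen V ∧ Nonempty (↥U ≃ₜ ↥V)

/-- The intrinsic (topological) boundary of a `d`-manifold with boundary: the set
of points having no neighbourhood homeomorphic to `ℝᵈ`. -/
def mfdBoundary (d : ℕ) (M : Type*) [TopologicalSpace M] : Set M :=
  {x | ¬ ∃ U : Set M, x ∈ U ∧ IsOpen U ∧ Nonempty (↥U ≃ₜ Euc d)}

/-- Orientability of a (connected) manifold without boundary, expressed through the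
existence of an integral fundamental cycle. -/
def OrientableMfd (d : ℕ) (M : Type*) [TopologicalSpace M] : Prop := HasFundClass d M ∅

/-- The simplicial volume `‖X, ∂X‖` of a manifold rel its (intrinsic) boundary. -/
def svRel (d : ℕ) (X : Type*) [TopologicalSpace X] : ℝ≥0∞ :=
  relSimplicialVolume d X (mfdBoundary d X)

/-! ### Model shapes -/

abbrev Circle1 : Type := ↥(Metric.sphere (0 : Euc 2) 1)
abbrev Sphere2 : Type := ↥(Metric.sphere (0 : Euc 3) 1)
abbrev Disk2 : Type := ↥(Metric.closedBall (0 : Euc 2) 1)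
abbrev Ball3 : Type := ↥(Metric.closedBall (0 : Euc 3) 1)
abbrev Torus2 : Type := Circle1 × Circle1
abbrev SolidTorus : Type := Disk2 × Circle1

def IsEmbeddedSphere2 {M : Type*} [TopologicalSpace M] (S : Set M) : Prop :=
  Nonempty (↥S ≃ₜ Sphere2)

def IsEmbeddedTorus {M : Type*} [TopologicalSpace M] (S : Set M) : Prop :=
  Nonempty (↥S ≃ₜ Torus2)

def IsEmbeddedCircle {M : Type*} [TopologicalSpace M] (γ : Set M) : Prop :=
  Nonempty (↥γ ≃ₜ Circle1)

def IsClosedBall3 {M : Type*} [TopologicalSpace M] (B : Set M) : Prop :=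
  Nonempty (↥B ≃ₜ Ball3)

def IsSolidTorus {M : Type*} [TopologicalSpace M] (N : Set M) : Prop :=
  Nonempty (↥N ≃ₜ SolidTorus)

/-- `B` is an embedded closed `3`-ball whose boundary sphere is the subset `S`. -/
def IsBall3WithBoundary {M : Type*} [TopologicalSpace M] (B S : Set M) : Prop :=
  ∃ h : ↥B ≃ₜ Ball3, Subtype.val '' (⇑h.symm '' {y : Ball3 | ‖(y : Euc 3)‖ = 1}) = S

/-- The embedded `2`-sphere `S` bounds a closed `3`-ball in `M`. -/
def BoundsBall3 {M : Type*} [TopologicalSpace M] (S : Set M) : Prop :=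
  ∃ B : Set M, IsBall3WithBoundary B S

/-- A `3`-manifold is irreducible if every embedded `2`-sphere bounds a closed `3`-ball. -/
def Irreducible3 (M : Type*) [TopologicalSpace M] : Prop :=
  ∀ S : Set M, IsEmbeddedSphere2 S → BoundsBall3 S

/-- `D` is an embedded closed `2`-disc whose boundary circle is the subset `γ`. -/
def IsDisk2WithBoundary {M : Type*} [TopologicalSpace M] (D γ : Set M) : Prop :=
  ∃ h : ↥D ≃ₜ Disk2, Subtype.val '' (⇑h.symm '' {y : Disk2 | ‖(y : Euc 2)‖ = 1}) = γ

/-- The surface `S ⊆ M` is compressible in the subset `A ⊆ M`: some embedded circle in `S`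
bounds no disc inside `S` but bounds an embedded disc `D ⊆ A` with `D ∩ S = γ`. -/
def IsCompressibleIn {M : Type*} [TopologicalSpace M] (S A : Set M) : Prop :=
  ∃ γ : Set M, γ ⊆ S ∧ IsEmbeddedCircle γ ∧
    (¬ ∃ D : Set M, D ⊆ S ∧ IsDisk2WithBoundary D γ) ∧
    ∃ D : Set M, D ⊆ A ∧ IsDisk2WithBoundary D γ ∧ D ∩ S = γ

/-! ### Loops and `π₁` conditions -/

/-- `γ` is a loop contained in `S`. -/
def IsLoopIn {M : Type*} [TopologicalSpace M] (S : Set M) (γ : C(unitInterval, M)) : Prop :=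
  (∀ t, γ t ∈ S) ∧ γ 0 = γ 1

/-- The loop `γ` is null-homotopic (rel its base point), through a homotopy contained in `T`. -/
def NullHomotopicIn {M : Type*} [TopologicalSpace M] (T : Set M)
    (γ : C(unitInterval, M)) : Prop :=
  ∃ H : C(unitInterval × unitInterval, M), (∀ p, H p ∈ T) ∧
    (∀ t, H (0, t) = γ t) ∧ (∀ t, H (1, t) = γ 0) ∧
    (∀ s, H (s, 0) = γ 0) ∧ (∀ s, H (s, 1) = γ 0)

/-- The inclusion `S ⊆ T` is `π₁`-injective (for every base point). -/
def Pi1InjectiveIncl {M : Type*} [TopologicalSpace M] (S T : Set M) : Prop :=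
  ∀ γ : C(unitInterval, M), IsLoopIn S γ → NullHomotopicIn T γ → NullHomotopicIn S γ

/-- The inclusion `S ⊆ T` induces the trivial map on fundamental groups. -/
def Pi1TrivialIncl {M : Type*} [TopologicalSpace M] (S T : Set M) : Prop :=
  ∀ γ : C(unitInterval, M), IsLoopIn S γ → NullHomotopicIn T γ

/-! ### Exhaustions -/

/-- An exhaustion of an open `3`-manifold by compact codimension-zero submanifolds:
`M = ⋃ₙ Mₙ`, each `Mₙ` is a connected compact `3`-manifold with boundary, every component
of `M ∖ int(Mₙ)` is unbounded (not relatively compact), and `Mₙ ⊆ int(Mₙ₊₁)`. -/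
structure IsExhaustion (M : Type*) [TopologicalSpace M] (E : ℕ → Set M) : Prop where
  iUnion_eq : (⋃ n, E n) = Set.univ
  conn : ∀ n, IsConnected (E n)
  cpt : ∀ n, IsCompact (E n)
  mfd : ∀ n, IsTopManifoldWithBoundary 3 ↥(E n)
  bdry_eq : ∀ n, Subtype.val '' mfdBoundary 3 ↥(E n) = frontier (E n)
  subset_int : ∀ n, E n ⊆ interior (E (n + 1))
  unbounded_compl : ∀ n, ∀ x ∈ (interior (E n))ᶜ,
    ¬ IsCompact (closure (connectedComponentIn ((interior (E n))ᶜ) x))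

/-- Every connected component of `S` is an embedded sphere or torus. -/
def SphereOrTorusComponents {M : Type*} [TopologicalSpace M] (S : Set M) : Prop :=
  ∀ x ∈ S, IsEmbeddedSphere2 (connectedComponentIn S x) ∨
    IsEmbeddedTorus (connectedComponentIn S x)

/-- A compact connected codimension-zero submanifold (with boundary) of a `d`-manifold. -/
def IsCompactCodim0Submanifold (d : ℕ) {M : Type*} [TopologicalSpace M] (N : Set M) : Prop :=
  IsCompact N ∧ IsConnected N ∧ IsTopManifoldWithBoundary d ↥N ∧
    Subtype.val '' mfdBoundary d ↥N = frontier N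

lemma TopSimplex.nonempty (n : ℕ) : Nonempty (TopSimplex n) :=
  ⟨⟨fun j => if j = 0 then 1 else 0, by
    constructor
    · intro j; by_cases h : j = 0 <;> simp [h]
    · simp⟩⟩

/-- On a compact space, the boundary ℓ¹-norm of a degree-3 chain is at most 4 times
its ℓ¹-norm. -/
lemma LFChain.bdryNorm_le {X : Type} [TopologicalSpace X] [CompactSpace X]
    (c : LFChain ℝ 3 X) : c.bdryNorm ≤ 4 * c.l1Norm := by
  have hne := TopSimplex.nonempty 3
  have hsupp : (Function.support c.coeff).Finite := by
    refine (c.locFin Set.univ isCompact_univ).subset ?_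
    intro σ hσ
    obtain ⟨t⟩ := hne
    exact ⟨hσ, ⟨σ t, ⟨t, rfl⟩, trivial⟩⟩
  set s : Finset (SingularSimplex 3 X) := hsupp.toFinset with hs
  have hmem : ∀ σ, c.coeff σ ≠ 0 → σ ∈ s := by
    intro σ hσ; simpa [hs] using hσ
  -- the boundary coefficient as a finite sum
  have hb : ∀ τ : SingularSimplex 2 X, c.bdryCoeff τ =
      ∑ σ ∈ s, c.coeff σ * ∑ i : Fin 4, (-1 : ℝ) ^ (i : ℕ) *
        (if σ.comp (simplexFace i) = τ then 1 else 0) := by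
    intro τ
    have : c.bdryCoeff τ = ∑ᶠ σ : SingularSimplex 3 X,
        c.coeff σ * ∑ i : Fin 4, (-1 : ℝ) ^ (i : ℕ) *
          (if σ.comp (simplexFace i) = τ then 1 else 0) := rfl
    rw [this]
    refine finsum_eq_finset_sum_of_support_subset _ ?_
    intro σ hσ
    have : c.coeff σ ≠ 0 := by
      intro h; apply hσ; simp [h]
    exact hmem σ this
  set T : Finset (SingularSimplex 2 X) :=
    s.biUnion (fun σ => Finset.image (fun i : Fin 4 => σ.comp (simplexFace i)) Finset.univ)
    with hT
  have hzero : ∀ τ ∉ T, c.bdryCoeff τ = 0 := by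
    intro τ hτ
    rw [hb]
    refine Finset.sum_eq_zero fun σ hσ => ?_
    have : (∑ i : Fin 4, (-1 : ℝ) ^ (i : ℕ) *
        (if σ.comp (simplexFace i) = τ then 1 else 0)) = 0 := by
      refine Finset.sum_eq_zero fun i _ => ?_
      have : σ.comp (simplexFace i) ≠ τ := by
        intro h
        exact hτ (Finset.mem_biUnion.2 ⟨σ, hσ, Finset.mem_image.2 ⟨i, Finset.mem_univ i, h⟩⟩)
      simp [this]
    rw [this, mul_zero]
  have hnorm : c.bdryNorm = ∑ τ ∈ T, ENNReal.ofReal |c.bdryCoeff τ| := by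
    refine tsum_eq_sum fun τ hτ => ?_
    rw [hzero τ hτ]; simp
  rw [hnorm]
  -- abbreviate the face-count
  have key : ∀ τ ∈ T, ENNReal.ofReal |c.bdryCoeff τ| ≤
      ∑ σ ∈ s, ENNReal.ofReal (|c.coeff σ| * ∑ i : Fin 4,
        (if σ.comp (simplexFace i) = τ then (1 : ℝ) else 0)) := by
    intro τ _
    rw [hb]
    calc ENNReal.ofReal |∑ σ ∈ s, c.coeff σ * ∑ i : Fin 4, (-1 : ℝ) ^ (i : ℕ) *
            (if σ.comp (simplexFace i) = τ then 1 else 0)|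
        ≤ ENNReal.ofReal (∑ σ ∈ s, |c.coeff σ| * ∑ i : Fin 4,
            (if σ.comp (simplexFace i) = τ then (1 : ℝ) else 0)) := by
          refine ENNReal.ofReal_le_ofReal ?_
          refine (Finset.abs_sum_le_sum_abs _ _).trans (Finset.sum_le_sum fun σ _ => ?_)
          rw [abs_mul]
          gcongr
          refine (Finset.abs_sum_le_sum_abs _ _).trans (Finset.sum_le_sum fun i _ => ?_)
          rw [abs_mul, abs_pow, abs_neg, abs_one, one_pow, one_mul]
          split <;> simp
      _ = ∑ σ ∈ s, ENNReal.ofReal (|c.coeff σ| * ∑ i : Fin 4,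
            (if σ.comp (simplexFace i) = τ then (1 : ℝ) else 0)) := by
          refine ENNReal.ofReal_sum_of_nonneg fun σ _ => ?_
          refine mul_nonneg (abs_nonneg _) (Finset.sum_nonneg fun i _ => ?_)
          split <;> norm_num
  calc ∑ τ ∈ T, ENNReal.ofReal |c.bdryCoeff τ|
      ≤ ∑ τ ∈ T, ∑ σ ∈ s, ENNReal.ofReal (|c.coeff σ| * ∑ i : Fin 4,
          (if σ.comp (simplexFace i) = τ then (1 : ℝ) else 0)) :=
        Finset.sum_le_sum key
    _ = ∑ σ ∈ s, ∑ τ ∈ T, ENNReal.ofReal (|c.coeff σ| * ∑ i : Fin 4,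
          (if σ.comp (simplexFace i) = τ then (1 : ℝ) else 0)) := Finset.sum_comm
    _ ≤ ∑ σ ∈ s, ∑ τ ∈ T, ∑ i : Fin 4, ENNReal.ofReal
          (|c.coeff σ| * (if σ.comp (simplexFace i) = τ then (1 : ℝ) else 0)) := by
        refine Finset.sum_le_sum fun σ _ => Finset.sum_le_sum fun τ _ => ?_
        rw [Finset.mul_sum]
        refine le_of_eq (ENNReal.ofReal_sum_of_nonneg fun i _ => ?_)
        refine mul_nonneg (abs_nonneg _) ?_
        split <;> norm_num
    _ = ∑ σ ∈ s, ∑ i : Fin 4, ∑ τ ∈ T, ENNReal.ofReal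
          (|c.coeff σ| * (if σ.comp (simplexFace i) = τ then (1 : ℝ) else 0)) := by
        refine Finset.sum_congr rfl fun σ _ => Finset.sum_comm
    _ ≤ ∑ σ ∈ s, ∑ _i : Fin 4, ENNReal.ofReal |c.coeff σ| := by
        refine Finset.sum_le_sum fun σ _ => Finset.sum_le_sum fun i _ => ?_
        by_cases h : σ.comp (simplexFace i) ∈ T
        · rw [Finset.sum_eq_single_of_mem (σ.comp (simplexFace i)) h
            (fun τ _ hne => by simp [Ne.symm hne])]
          simp
        · refine le_trans (le_of_eq (Finset.sum_eq_zero fun τ hτ => ?_)) zero_le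
          have : σ.comp (simplexFace i) ≠ τ := fun he => h (he ▸ hτ)
          simp [this]
    _ = ∑ σ ∈ s, 4 * ENNReal.ofReal |c.coeff σ| := by
        refine Finset.sum_congr rfl fun σ _ => ?_
        simp [Finset.sum_const, mul_comm]
    _ = 4 * ∑ σ ∈ s, ENNReal.ofReal |c.coeff σ| := by rw [Finset.mul_sum]
    _ ≤ 4 * c.l1Norm := by
        gcongr
        exact ENNReal.sum_le_tsum s

/-- Let `M` be a compact orientable `3`-manifold with boundary whose relative simplicial
volume `‖M, ∂M‖` vanishes. Then for every `ε > 0` there exists a real relative fundamental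
cycle `z ∈ C₃(M, ∂M; ℝ)` with `‖z‖₁ ≤ ε` and `‖∂z‖₁ ≤ ε`. -/
theorem exists_small_relative_fundamental_cycle
    (M : Type) [TopologicalSpace M] [CompactSpace M]
    (hM : IsTopManifoldWithBoundary 3 M) (hconn : ConnectedSpace M)
    (hbdry : (mfdBoundary 3 M).Nonempty)
    (hor : HasFundClass 3 M (mfdBoundary 3 M))
    (hvol : svRel 3 M = 0) (ε : ℝ) (hε : 0 < ε) :
    ∃ z : LFChain ℝ 3 M, IsRealFundCycle 3 M (mfdBoundary 3 M) z ∧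
      z.l1Norm ≤ ENNReal.ofReal ε ∧ z.bdryNorm ≤ ENNReal.ofReal ε := by
  have h0 : relSimplicialVolume 3 M (mfdBoundary 3 M) = 0 := hvol
  have hδ0 : (0 : ℝ≥0∞) < ENNReal.ofReal ε / 4 :=
    ENNReal.div_pos (by simp [ENNReal.ofReal_eq_zero, not_le, hε]) (by norm_num)
  have hlt : relSimplicialVolume 3 M (mfdBoundary 3 M) < ENNReal.ofReal ε / 4 := by
    rw [h0]; exact hδ0
  rw [relSimplicialVolume, iInf_lt_iff] at hlt
  obtain ⟨⟨z, hz⟩, hzlt⟩ := hlt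
  refine ⟨z, hz, ?_, ?_⟩
  · refine le_trans hzlt.le (ENNReal.div_le_of_le_mul ?_)
    exact le_mul_of_one_le_right zero_le (by norm_num)
  · refine le_trans z.bdryNorm_le ?_
    calc 4 * z.l1Norm ≤ 4 * (ENNReal.ofReal ε / 4) := mul_le_mul_right hzlt.le 4
      _ = ENNReal.ofReal ε := ENNReal.mul_div_cancel (by norm_num) (by norm_num)
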